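/- Let M be a map with flag set F and generators s0, s1, s2, and let r0, r1, r2 be the truncation generators on F × {0,1,2}. Suppose M is a 2-orbit map and Tr(M) is a 2-orbit map. Then exactly one of the following holds: (i) M is of type 2 and Tr(M) is of type 2; (ii) M is of type 2_{01} and Tr(M) is of type 2_{0}; (iii) M is of type 2_{2} and Tr(M) is of type 2_{12}. -/

import Mathlib

section Helpers
open MulAction Equiv Subgroup

variable {α : Type*}

def Rg (S : Set (Equiv.Perm α)) (x y : α) : Prop :=
  x ∈ MulAction.orbit (↥(Subgroup.centralizer S)) y

variable {S : Set (Equiv.Perm α)}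

theorem Rg_iff {x y : α} : Rg S x y ↔ ∃ γ ∈ Subgroup.centralizer S, γ y = x := by
  rw [Rg, mem_orbit_iff]
  constructor
  · rintro ⟨g, hg⟩; exact ⟨g.1, g.2, hg⟩
  · rintro ⟨γ, hγ, h⟩; exact ⟨⟨γ, hγ⟩, h⟩

theorem Rg_refl (x : α) : Rg S x x := mem_orbit_self x

theorem Rg_symm {x y : α} (h : Rg S x y) : Rg S y x := by
  obtain ⟨γ, hγ, h⟩ := Rg_iff.mp h
  exact Rg_iff.mpr ⟨γ⁻¹, inv_mem hγ, by rw [← h]; simp⟩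

theorem Rg_trans {x y z : α} (h1 : Rg S x y) (h2 : Rg S y z) : Rg S x z := by
  obtain ⟨γ, hγ, h⟩ := Rg_iff.mp h1
  obtain ⟨δ, hδ, h'⟩ := Rg_iff.mp h2
  exact Rg_iff.mpr ⟨γ * δ, mul_mem hγ hδ, by simp [Equiv.Perm.mul_apply, h', h]⟩

theorem Rg_move {t : Equiv.Perm α} (ht : t ∈ S) {x y : α} (h : Rg S x y) :
    Rg S (t x) (t y) := by
  obtain ⟨γ, hγ, h⟩ := Rg_iff.mp h
  have hc : t * γ = γ * t := Subgroup.mem_centralizer_iff.mp hγ t ht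
  refine Rg_iff.mpr ⟨γ, hγ, ?_⟩
  have := congrArg (fun e => e y) hc
  simp only [Equiv.Perm.mul_apply] at this
  rw [← this, h]

theorem Rg_unmove {t : Equiv.Perm α} (ht : t ∈ S) {x y : α} (h : Rg S (t x) (t y)) :
    Rg S x y := by
  obtain ⟨γ, hγ, h⟩ := Rg_iff.mp h
  have hc : t * γ = γ * t := Subgroup.mem_centralizer_iff.mp hγ t ht
  have hcy := congrArg (fun e => e y) hc
  simp only [Equiv.Perm.mul_apply] at hcy
  refine Rg_iff.mpr ⟨γ, hγ, ?_⟩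
  have : t (γ y) = t x := by rw [hcy]; exact h
  exact t.injective this

theorem Rg_card2_aux
    (h2 : Nat.card (MulAction.orbitRel.Quotient (↥(Subgroup.centralizer S)) α) = 2) :
    (∃ u v : α, ¬ Rg S u v) ∧
      (∀ u v w : α, ¬ Rg S u v → Rg S w u ∨ Rg S w v) := by
  have h2' : Nat.card (Quotient (MulAction.orbitRel (↥(Subgroup.centralizer S)) α)) = 2 := h2
  obtain ⟨X, Y, hXY, huniv⟩ := Nat.card_eq_two_iff.mp h2'
  have hall : ∀ z : Quotient (MulAction.orbitRel (↥(Subgroup.centralizer S)) α),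
      z = X ∨ z = Y := by
    intro z
    have : z ∈ ({X, Y} : Set _) := huniv ▸ Set.mem_univ z
    simpa using this
  have key : ∀ a b : α,
      (Quotient.mk'' a : Quotient (MulAction.orbitRel (↥(Subgroup.centralizer S)) α))
        = Quotient.mk'' b ↔ Rg S a b := by
    intro a b
    rw [Quotient.eq'']
    exact MulAction.orbitRel_apply
  constructor
  · obtain ⟨u, hu⟩ := Quotient.exists_rep X
    obtain ⟨v, hv⟩ := Quotient.exists_rep Y
    refine ⟨u, v, ?_⟩
    rw [← key]
    show Quotient.mk _ u ≠ Quotient.mk _ v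
    rw [hu, hv]; exact hXY
  · intro u v w huv
    rw [← key] at huv
    have hu := hall (Quotient.mk'' u)
    have hv := hall (Quotient.mk'' v)
    have hw := hall (Quotient.mk'' w)
    rw [← key, ← key]
    rcases hu with hu | hu <;> rcases hv with hv | hv <;> rcases hw with hw | hw <;>
      simp_all

theorem Rg_uniform
    (h2 : Nat.card (MulAction.orbitRel.Quotient (↥(Subgroup.centralizer S)) α) = 2)
    {t : Equiv.Perm α} (ht : t ∈ S) {y0 : α} (h : Rg S (t y0) y0) :
    ∀ y, Rg S (t y) y := by
  intro y
  by_cases hy : Rg S y y0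
  · exact Rg_trans (Rg_trans (Rg_move ht hy) h) (Rg_symm hy)
  · by_contra hne
    rcases (Rg_card2_aux h2).2 y y0 (t y) hy with h1 | h1
    · exact hne h1
    · exact hy (Rg_unmove ht (Rg_trans h1 (Rg_symm h)))


end Helpers


/-- The automorphism group of a map with generators t0, t1, t2: all permutations of the
flag set commuting with each generator. -/
def mapAut {α : Type*} (t0 t1 t2 : Equiv.Perm α) : Subgroup (Equiv.Perm α) :=
  Subgroup.centralizer {t0, t1, t2}

/-- A (2-orbit) map with generators t0, t1, t2 is of type 2_I if for every flag x and each
i ∈ {0,1,2}, the flags x and t_i x lie in the same automorphism orbit precisely when i ∈ I. -/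
def isOfType2 {α : Type*} (t0 t1 t2 : Equiv.Perm α) (I : Set (Fin 3)) : Prop :=
  ∀ x : α,
    ((∃ γ ∈ mapAut t0 t1 t2, γ x = t0 x) ↔ (0 : Fin 3) ∈ I) ∧
    ((∃ γ ∈ mapAut t0 t1 t2, γ x = t1 x) ↔ (1 : Fin 3) ∈ I) ∧
    ((∃ γ ∈ mapAut t0 t1 t2, γ x = t2 x) ↔ (2 : Fin 3) ∈ I)

/-- if M and Tr(M) are both 2-orbit maps, then exactly one of the following
holds: (i) both are of type 2; (ii) M is of type 2_{01} and Tr(M) of type 2_0;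
(iii) M is of type 2_2 and Tr(M) of type 2_{12}. -/

theorem truncation_of_two_orbit_two_orbit
    {F : Type*} [Fintype F] [Nonempty F]
    (s0 s1 s2 : Equiv.Perm F)
    (hs0i : s0 * s0 = 1) (hs0f : ∀ x, s0 x ≠ x)
    (hs1i : s1 * s1 = 1) (hs1f : ∀ x, s1 x ≠ x)
    (hs2i : s2 * s2 = 1) (hs2f : ∀ x, s2 x ≠ x)
    (hcomm : s0 * s2 = s2 * s0)
    (hs02i : (s0 * s2) * (s0 * s2) = 1) (hs02f : ∀ x, (s0 * s2) x ≠ x)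
    (htrans : ∀ x y : F, ∃ g ∈ Subgroup.closure ({s0, s1, s2} : Set (Equiv.Perm F)), g x = y)
    (r0 r1 r2 : Equiv.Perm (F × Fin 3))
    (hr0 : ∀ Φ : F, r0 (Φ, 0) = (s1 Φ, 0) ∧ r0 (Φ, 1) = (s0 Φ, 1) ∧ r0 (Φ, 2) = (s1 Φ, 2))
    (hr1 : ∀ Φ : F, r1 (Φ, 0) = (s2 Φ, 0) ∧ r1 (Φ, 1) = (Φ, 2) ∧ r1 (Φ, 2) = (Φ, 1))
    (hr2 : ∀ Φ : F, r2 (Φ, 0) = (Φ, 2) ∧ r2 (Φ, 1) = (s2 Φ, 1) ∧ r2 (Φ, 2) = (Φ, 0))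
    (hM2 : Nat.card (MulAction.orbitRel.Quotient
      (↥(Subgroup.centralizer ({s0, s1, s2} : Set (Equiv.Perm F)))) F) = 2)
    (hTr2 : Nat.card (MulAction.orbitRel.Quotient
      (↥(Subgroup.centralizer ({r0, r1, r2} : Set (Equiv.Perm (F × Fin 3))))) (F × Fin 3)) = 2) :
    ((isOfType2 s0 s1 s2 ∅ ∧ isOfType2 r0 r1 r2 ∅) ∧
      ¬(isOfType2 s0 s1 s2 {0, 1} ∧ isOfType2 r0 r1 r2 {0}) ∧
      ¬(isOfType2 s0 s1 s2 {2} ∧ isOfType2 r0 r1 r2 {1, 2})) ∨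
    (¬(isOfType2 s0 s1 s2 ∅ ∧ isOfType2 r0 r1 r2 ∅) ∧
      (isOfType2 s0 s1 s2 {0, 1} ∧ isOfType2 r0 r1 r2 {0}) ∧
      ¬(isOfType2 s0 s1 s2 {2} ∧ isOfType2 r0 r1 r2 {1, 2})) ∨
    (¬(isOfType2 s0 s1 s2 ∅ ∧ isOfType2 r0 r1 r2 ∅) ∧
      ¬(isOfType2 s0 s1 s2 {0, 1} ∧ isOfType2 r0 r1 r2 {0}) ∧
      (isOfType2 s0 s1 s2 {2} ∧ isOfType2 r0 r1 r2 {1, 2})) := by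
  classical
  set SM : Set (Equiv.Perm F) := {s0, s1, s2} with hSMdef
  set ST : Set (Equiv.Perm (F × Fin 3)) := {r0, r1, r2} with hSTdef
  have hm0 : s0 ∈ SM := by rw [hSMdef]; simp
  have hm1 : s1 ∈ SM := by rw [hSMdef]; simp
  have hm2 : s2 ∈ SM := by rw [hSMdef]; simp
  have hn0 : r0 ∈ ST := by rw [hSTdef]; simp
  have hn1 : r1 ∈ ST := by rw [hSTdef]; simp
  have hn2 : r2 ∈ ST := by rw [hSTdef]; simp
  -- pointwise commutation for elements of the M-centralizer
  have hcommM : ∀ γ ∈ Subgroup.centralizer SM,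
      (∀ Φ, γ (s0 Φ) = s0 (γ Φ)) ∧ (∀ Φ, γ (s1 Φ) = s1 (γ Φ)) ∧
      (∀ Φ, γ (s2 Φ) = s2 (γ Φ)) := by
    intro γ hγ
    have h := Subgroup.mem_centralizer_iff.mp hγ
    refine ⟨fun Φ => ?_, fun Φ => ?_, fun Φ => ?_⟩
    · have := congrArg (fun e => e Φ) (h s0 hm0)
      simpa [Equiv.Perm.mul_apply] using this.symm
    · have := congrArg (fun e => e Φ) (h s1 hm1)
      simpa [Equiv.Perm.mul_apply] using this.symm
    · have := congrArg (fun e => e Φ) (h s2 hm2)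
      simpa [Equiv.Perm.mul_apply] using this.symm
  have jcases : ∀ j : Fin 3, j = 0 ∨ j = 1 ∨ j = 2 := by decide
  -- lifting automorphisms of M to Tr(M)
  have hlift : ∀ (j : Fin 3) (x y : F), Rg SM x y → Rg ST ((x, j) : F × Fin 3) (y, j) := by
    intro j x y hrel
    obtain ⟨γ, hγ, hxy⟩ := Rg_iff.mp hrel
    obtain ⟨hc0, hc1, hc2⟩ := hcommM γ hγ
    refine Rg_iff.mpr ⟨Equiv.prodCongr γ (Equiv.refl (Fin 3)), ?_, by simp [hxy]⟩
    rw [Subgroup.mem_centralizer_iff]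
    intro t ht
    rw [hSTdef] at ht
    simp only [Set.mem_insert_iff, Set.mem_singleton_iff] at ht
    rcases ht with h | h | h <;> subst h <;> (apply Equiv.ext; rintro ⟨Φ, j'⟩) <;>
      rcases jcases j' with h' | h' | h' <;> subst h' <;>
      simp [Equiv.Perm.mul_apply, hr0, hr1, hr2, hc0, hc1, hc2]
  have h2auxM := Rg_card2_aux (S := SM) hM2
  have h2auxT := Rg_card2_aux (S := ST) hTr2
  obtain ⟨a, b, hab⟩ := h2auxM.1
  have trichM := h2auxM.2
  obtain ⟨U, V, hUV⟩ := h2auxT.1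
  -- if all three truncation generators preserve orbits, Tr(M) is 1-orbit: contradiction
  have hallQ : (∀ y, Rg ST (r0 y) y) → (∀ y, Rg ST (r1 y) y) →
      (∀ y, Rg ST (r2 y) y) → False := by
    intro q0 q1 q2
    have hlay : ∀ (x : F) (j : Fin 3), Rg ST ((x, j) : F × Fin 3) (x, 0) := by
      intro x j
      have h20 : Rg ST ((x, 0) : F × Fin 3) (x, 2) := by
        have := q2 ((x, 2) : F × Fin 3); rwa [(hr2 x).2.2] at this
      have h21 : Rg ST ((x, 2) : F × Fin 3) (x, 1) := by
        have := q1 ((x, 1) : F × Fin 3); rwa [(hr1 x).2.1] at this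
      rcases jcases j with h | h | h <;> subst h
      · exact Rg_refl _
      · exact Rg_trans (Rg_symm h21) (Rg_symm h20)
      · exact Rg_symm h20
    have hlay0 : ∀ g ∈ Subgroup.closure SM, ∀ x : F,
        Rg ST ((g x, 0) : F × Fin 3) (x, 0) := by
      intro g hg
      refine Subgroup.closure_induction ?_ ?_ ?_ ?_ hg
      · intro t ht
        rw [hSMdef] at ht
        simp only [Set.mem_insert_iff, Set.mem_singleton_iff] at ht
        rcases ht with h | h | h <;> subst h <;> intro x
        · have hB := q0 ((x, 1) : F × Fin 3)
          rw [(hr0 x).2.1] at hB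
          exact Rg_trans (Rg_symm (hlay _ 1)) (Rg_trans hB (hlay x 1))
        · have := q0 ((x, 0) : F × Fin 3); rwa [(hr0 x).1] at this
        · have := q1 ((x, 0) : F × Fin 3); rwa [(hr1 x).1] at this
      · intro x
        simp only [Equiv.Perm.one_apply]
        exact Rg_refl _
      · intro g h hg hh pg ph x
        have : (g * h) x = g (h x) := rfl
        rw [this]
        exact Rg_trans (pg (h x)) (ph x)
      · intro g hg pg x
        have := pg (g⁻¹ x)
        rw [show g (g⁻¹ x) = x from g.apply_symm_apply x] at this
        exact Rg_symm this
    obtain ⟨u, ju⟩ := U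
    obtain ⟨v, jv⟩ := V
    obtain ⟨g, hg, hguv⟩ := htrans u v
    have h1 : Rg ST ((v, 0) : F × Fin 3) (u, 0) := hguv ▸ hlay0 g hg u
    exact hUV (Rg_trans (hlay u ju) (Rg_trans (Rg_symm h1) (Rg_symm (hlay v jv))))
  -- layer links via r1 and r2
  have link12 : ∀ x y : F,
      Rg ST ((x, 1) : F × Fin 3) (y, 1) ↔ Rg ST ((x, 2) : F × Fin 3) (y, 2) := by
    intro x y
    constructor
    · intro h
      have := Rg_move hn1 h
      rwa [(hr1 x).2.1, (hr1 y).2.1] at this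
    · intro h
      have := Rg_move hn1 h
      rwa [(hr1 x).2.2, (hr1 y).2.2] at this
  have link02 : ∀ x y : F,
      Rg ST ((x, 0) : F × Fin 3) (y, 0) ↔ Rg ST ((x, 2) : F × Fin 3) (y, 2) := by
    intro x y
    constructor
    · intro h
      have := Rg_move hn2 h
      rwa [(hr2 x).1, (hr2 y).1] at this
    · intro h
      have := Rg_move hn2 h
      rwa [(hr2 x).2.2, (hr2 y).2.2] at this
  -- the two M-orbits stay distinct in every layer
  have hd0 : ¬ Rg ST ((a, 0) : F × Fin 3) (b, 0) := by
    intro hd0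
    have hd2 := (link02 a b).mp hd0
    have hd1 := (link12 a b).mpr hd2
    have mono : ∀ (j : Fin 3), Rg ST ((a, j) : F × Fin 3) (b, j) →
        ∀ x y : F, Rg ST ((x, j) : F × Fin 3) (y, j) := by
      intro j hd x y
      rcases trichM a b x hab with hx | hx <;> rcases trichM a b y hab with hy | hy
      · exact Rg_trans (hlift j x a hx) (Rg_symm (hlift j y a hy))
      · exact Rg_trans (hlift j x a hx) (Rg_trans hd (Rg_symm (hlift j y b hy)))
      · exact Rg_trans (hlift j x b hx)
          (Rg_trans (Rg_symm hd) (Rg_symm (hlift j y a hy)))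
      · exact Rg_trans (hlift j x b hx) (Rg_symm (hlift j y b hy))
    have q0 : ∀ y, Rg ST (r0 y) y := by
      refine Rg_uniform hTr2 hn0 (y0 := ((a, 0) : F × Fin 3)) ?_
      rw [(hr0 a).1]; exact mono 0 hd0 (s1 a) a
    have q1 : ∀ y, Rg ST (r1 y) y := by
      refine Rg_uniform hTr2 hn1 (y0 := ((a, 0) : F × Fin 3)) ?_
      rw [(hr1 a).1]; exact mono 0 hd0 (s2 a) a
    have q2 : ∀ y, Rg ST (r2 y) y := by
      refine Rg_uniform hTr2 hn2 (y0 := ((a, 1) : F × Fin 3)) ?_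
      rw [(hr2 a).2.1]; exact mono 1 hd1 (s2 a) a
    exact hallQ q0 q1 q2
  have hd1 : ¬ Rg ST ((a, 1) : F × Fin 3) (b, 1) := fun h =>
    hd0 ((link02 a b).mpr ((link12 a b).mp h))
  -- orbits in each layer reflect M-orbits exactly
  have star : ∀ (j : Fin 3), ¬ Rg ST ((a, j) : F × Fin 3) (b, j) →
      ∀ x y : F, (Rg ST ((x, j) : F × Fin 3) (y, j) ↔ Rg SM x y) := by
    intro j hd x y
    constructor
    · intro h
      by_contra hxy
      rcases trichM a b x hab with hx | hx <;> rcases trichM a b y hab with hy | hy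
      · exact hxy (Rg_trans hx (Rg_symm hy))
      · exact hd (Rg_trans (Rg_symm (hlift j x a hx)) (Rg_trans h (hlift j y b hy)))
      · exact hd (Rg_trans (Rg_symm (hlift j y a hy))
          (Rg_trans (Rg_symm h) (hlift j x b hx)))
      · exact hxy (Rg_trans hx (Rg_symm hy))
    · exact hlift j x y
  -- uniform characterizations of the truncation generators
  have q0iff : ∀ y : F × Fin 3, (Rg ST (r0 y) y ↔ Rg SM (s0 a) a) := by
    intro y
    constructor
    · intro h
      have h' := Rg_uniform hTr2 hn0 h ((a, 1) : F × Fin 3)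
      rw [(hr0 a).2.1] at h'
      exact (star 1 hd1 (s0 a) a).mp h'
    · intro h
      have h' : Rg ST (r0 ((a, 1) : F × Fin 3)) ((a, 1) : F × Fin 3) := by
        rw [(hr0 a).2.1]; exact (star 1 hd1 (s0 a) a).mpr h
      exact Rg_uniform hTr2 hn0 h' y
  have q1iff : ∀ y : F × Fin 3, (Rg ST (r1 y) y ↔ Rg SM (s2 a) a) := by
    intro y
    constructor
    · intro h
      have h' := Rg_uniform hTr2 hn1 h ((a, 0) : F × Fin 3)
      rw [(hr1 a).1] at h'
      exact (star 0 hd0 (s2 a) a).mp h'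
    · intro h
      have h' : Rg ST (r1 ((a, 0) : F × Fin 3)) ((a, 0) : F × Fin 3) := by
        rw [(hr1 a).1]; exact (star 0 hd0 (s2 a) a).mpr h
      exact Rg_uniform hTr2 hn1 h' y
  have q2iff : ∀ y : F × Fin 3, (Rg ST (r2 y) y ↔ Rg SM (s2 a) a) := by
    intro y
    constructor
    · intro h
      have h' := Rg_uniform hTr2 hn2 h ((a, 1) : F × Fin 3)
      rw [(hr2 a).2.1] at h'
      exact (star 1 hd1 (s2 a) a).mp h'
    · intro h
      have h' : Rg ST (r2 ((a, 1) : F × Fin 3)) ((a, 1) : F × Fin 3) := by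
        rw [(hr2 a).2.1]; exact (star 1 hd1 (s2 a) a).mpr h
      exact Rg_uniform hTr2 hn2 h' y
  -- P0 ↔ P1
  have hP01 : Rg SM (s0 a) a ↔ Rg SM (s1 a) a := by
    have e1 : Rg ST (r0 ((a, 0) : F × Fin 3)) ((a, 0) : F × Fin 3) ↔ Rg SM (s1 a) a := by
      rw [(hr0 a).1]; exact star 0 hd0 (s1 a) a
    exact (q0iff ((a, 0) : F × Fin 3)).symm.trans e1
  have pXiff : ∀ {t : Equiv.Perm F}, t ∈ SM → ∀ x : F,
      (Rg SM (t x) x ↔ Rg SM (t a) a) := by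
    intro t ht x
    exact ⟨fun h => Rg_uniform hM2 ht h a, fun h => Rg_uniform hM2 ht h x⟩
  -- bridges from the orbit relation to the existential statements
  have bridgeM : ∀ (t : Equiv.Perm F) (x : F),
      (∃ γ ∈ mapAut s0 s1 s2, γ x = t x) ↔ Rg SM (t x) x := by
    intro t x
    exact Rg_iff.symm
  have bridgeT : ∀ (t : Equiv.Perm (F × Fin 3)) (y : F × Fin 3),
      (∃ γ ∈ mapAut r0 r1 r2, γ y = t y) ↔ Rg ST (t y) y := by
    intro t y
    exact Rg_iff.symm
  -- characterizations of being of a given type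
  have charM : ∀ I : Set (Fin 3), isOfType2 s0 s1 s2 I ↔
      ((Rg SM (s0 a) a ↔ (0 : Fin 3) ∈ I) ∧ (Rg SM (s1 a) a ↔ (1 : Fin 3) ∈ I) ∧
        (Rg SM (s2 a) a ↔ (2 : Fin 3) ∈ I)) := by
    intro I
    constructor
    · intro h
      obtain ⟨h0, h1, h2⟩ := h a
      exact ⟨(bridgeM s0 a).symm.trans h0, (bridgeM s1 a).symm.trans h1,
        (bridgeM s2 a).symm.trans h2⟩
    · rintro ⟨h0, h1, h2⟩ x
      exact ⟨(bridgeM s0 x).trans ((pXiff hm0 x).trans h0),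
        (bridgeM s1 x).trans ((pXiff hm1 x).trans h1),
        (bridgeM s2 x).trans ((pXiff hm2 x).trans h2)⟩
  have charT : ∀ I : Set (Fin 3), isOfType2 r0 r1 r2 I ↔
      ((Rg SM (s0 a) a ↔ (0 : Fin 3) ∈ I) ∧ (Rg SM (s2 a) a ↔ (1 : Fin 3) ∈ I) ∧
        (Rg SM (s2 a) a ↔ (2 : Fin 3) ∈ I)) := by
    intro I
    constructor
    · intro h
      obtain ⟨h0, h1, h2⟩ := h ((a, 0) : F × Fin 3)
      exact ⟨(q0iff _).symm.trans ((bridgeT r0 _).symm.trans h0),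
        (q1iff _).symm.trans ((bridgeT r1 _).symm.trans h1),
        (q2iff _).symm.trans ((bridgeT r2 _).symm.trans h2)⟩
    · rintro ⟨h0, h1, h2⟩ y
      exact ⟨(bridgeT r0 y).trans ((q0iff y).trans h0),
        (bridgeT r1 y).trans ((q1iff y).trans h1),
        (bridgeT r2 y).trans ((q2iff y).trans h2)⟩
  -- final case analysis
  by_cases hp0 : Rg SM (s0 a) a <;> by_cases hp2 : Rg SM (s2 a) a
  · -- both hold: Tr(M) would be 1-orbit, contradiction
    exfalso
    exact hallQ (fun y => (q0iff y).mpr hp0) (fun y => (q1iff y).mpr hp2)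
      (fun y => (q2iff y).mpr hp2)
  · -- P0 and ¬P2 : case (ii)
    refine Or.inr (Or.inl ⟨?_, ⟨?_, ?_⟩, ?_⟩)
    · rintro ⟨hM, -⟩
      exact (by simp : ¬ ((0 : Fin 3) ∈ (∅ : Set (Fin 3)))) (((charM ∅).mp hM).1.mp hp0)
    · exact (charM _).mpr ⟨iff_of_true hp0 (by simp), iff_of_true (hP01.mp hp0) (by simp),
        iff_of_false hp2 (by simp)⟩
    · exact (charT _).mpr ⟨iff_of_true hp0 (by simp), iff_of_false hp2 (by simp),
        iff_of_false hp2 (by simp)⟩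
    · rintro ⟨hM, -⟩
      exact (by simp : ¬ ((0 : Fin 3) ∈ ({2} : Set (Fin 3)))) (((charM {2}).mp hM).1.mp hp0)
  · -- ¬P0 and P2 : case (iii)
    have hnp1 : ¬ Rg SM (s1 a) a := fun h => hp0 (hP01.mpr h)
    refine Or.inr (Or.inr ⟨?_, ?_, ⟨?_, ?_⟩⟩)
    · rintro ⟨hM, -⟩
      exact (by simp : ¬ ((2 : Fin 3) ∈ (∅ : Set (Fin 3)))) (((charM ∅).mp hM).2.2.mp hp2)
    · rintro ⟨hM, -⟩
      exact hp0 (((charM {0, 1}).mp hM).1.mpr (by simp))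
    · exact (charM _).mpr ⟨iff_of_false hp0 (by simp), iff_of_false hnp1 (by simp),
        iff_of_true hp2 (by simp)⟩
    · exact (charT _).mpr ⟨iff_of_false hp0 (by simp), iff_of_true hp2 (by simp),
        iff_of_true hp2 (by simp)⟩
  · -- neither : case (i)
    have hnp1 : ¬ Rg SM (s1 a) a := fun h => hp0 (hP01.mpr h)
    refine Or.inl ⟨⟨?_, ?_⟩, ?_, ?_⟩
    · exact (charM _).mpr ⟨iff_of_false hp0 (by simp), iff_of_false hnp1 (by simp),
        iff_of_false hp2 (by simp)⟩
    · exact (charT _).mpr ⟨iff_of_false hp0 (by simp), iff_of_false hp2 (by simp),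
        iff_of_false hp2 (by simp)⟩
    · rintro ⟨hM, -⟩
      exact hp0 (((charM {0, 1}).mp hM).1.mpr (by simp))
    · rintro ⟨hM, -⟩
      exact hp2 (((charM {2}).mp hM).2.2.mpr (by simp))
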